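/- Let G be a finite group, let M_1, ..., M_s be subgroups of G, let x ∈ G, and let d be a positive integer. Set E(x, M_1, ..., M_s) = gcd(o(x, M_1), ..., o(x, M_s)). Then E(x^d, M_1, ..., M_s) = E(x, M_1, ..., M_s) / gcd(d, E(x, M_1, ..., M_s)). -/

import Mathlib

/-- `nOrd S x` is the smallest positive integer `k` such that `x ^ k ∈ S`. -/
noncomputable def nOrd {G : Type*} [Group G] (S : Set G) (x : G) : ℕ :=
  sInf {k : ℕ | 0 < k ∧ x ^ k ∈ S}

/-- `gOrd S x = gcd { nOrd S (g⁻¹ * x * g) : g ∈ G }`, the generalized order of `x`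
with respect to `S`. -/
noncomputable def gOrd {G : Type*} [Group G] [Fintype G] (S : Set G) (x : G) : ℕ :=
  Finset.univ.gcd fun g : G => nOrd S (g⁻¹ * x * g)

/-- `EOrd M x = gcd (gOrd M₁ x, ..., gOrd Mₛ x)` for a family of subgroups `M`. -/
noncomputable def EOrd {G : Type*} [Group G] [Fintype G] {s : ℕ}
    (M : Fin s → Subgroup G) (x : G) : ℕ :=
  Finset.univ.gcd fun i => gOrd ((M i : Subgroup G) : Set G) x

section aux

variable {G : Type*} [Group G] [Fintype G] (N : Subgroup G) (x : G)

lemma nOrd_nonempty : {k : ℕ | 0 < k ∧ x ^ k ∈ (N : Set G)}.Nonempty :=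
  ⟨Fintype.card G, Fintype.card_pos, by
    show x ^ _ ∈ N
    rw [pow_card_eq_one]; exact N.one_mem⟩

lemma nOrd_mem : 0 < nOrd (N : Set G) x ∧ x ^ nOrd (N : Set G) x ∈ N :=
  Nat.sInf_mem (nOrd_nonempty N x)

lemma nOrd_dvd_iff (k : ℕ) : x ^ k ∈ N ↔ nOrd (N : Set G) x ∣ k := by
  obtain ⟨hpos, hmem⟩ := nOrd_mem N x
  set n := nOrd (N : Set G) x with hn
  constructor
  · intro hk
    have hr : x ^ (k % n) ∈ N := by
      have hk' : x ^ k = (x ^ n) ^ (k / n) * x ^ (k % n) := by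
        rw [← pow_mul, ← pow_add, Nat.div_add_mod]
      have : x ^ (k % n) = ((x ^ n) ^ (k / n))⁻¹ * x ^ k := by
        rw [hk']; group
      rw [this]
      exact N.mul_mem (N.inv_mem (N.pow_mem hmem _)) hk
    by_contra hndvd
    have hmod : k % n ≠ 0 := fun h => hndvd (Nat.dvd_of_mod_eq_zero h)
    have : n ≤ k % n := Nat.sInf_le ⟨Nat.pos_of_ne_zero hmod, hr⟩
    exact absurd (Nat.mod_lt k hpos) (not_lt.mpr this)
  · rintro ⟨c, rfl⟩
    rw [pow_mul]
    exact N.pow_mem hmem c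

lemma nOrd_pow (d : ℕ) (hd : 0 < d) :
    nOrd (N : Set G) (x ^ d) = nOrd (N : Set G) x / Nat.gcd d (nOrd (N : Set G) x) := by
  obtain ⟨hpos, -⟩ := nOrd_mem N x
  set n := nOrd (N : Set G) x with hn
  set g := Nat.gcd d n with hg
  have hgpos : 0 < g := Nat.gcd_pos_of_pos_left n hd
  have hgd : g ∣ d := Nat.gcd_dvd_left d n
  have hgn : g ∣ n := Nat.gcd_dvd_right d n
  set m := n / g with hm
  have hmpos : 0 < m := Nat.div_pos (Nat.le_of_dvd hpos hgn) hgpos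
  have key : ∀ k, (x ^ d) ^ k ∈ N ↔ m ∣ k := by
    intro k
    rw [← pow_mul, nOrd_dvd_iff N x (d * k), ← hn]
    constructor
    · intro hdvd
      have h1 : m ∣ (d / g) * k := by
        have : g * m ∣ g * ((d / g) * k) := by
          rw [Nat.mul_div_cancel' hgn, ← mul_assoc, Nat.mul_div_cancel' hgd]
          exact hdvd
        exact (mul_dvd_mul_iff_left hgpos.ne').mp this
      exact (Nat.Coprime.dvd_of_dvd_mul_left
        (Nat.coprime_div_gcd_div_gcd hgpos).symm h1)
    · rintro ⟨c, rfl⟩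
      obtain ⟨e, he⟩ := hgd
      calc n = g * m := (Nat.mul_div_cancel' hgn).symm
      _ ∣ d * (m * c) := by
        rw [he, mul_assoc]
        exact mul_dvd_mul_left g ⟨e * c, by ring⟩
  apply le_antisymm
  · exact Nat.sInf_le ⟨hmpos, (key m).mpr dvd_rfl⟩
  · obtain ⟨h1, h2⟩ := nOrd_mem N (x ^ d)
    exact Nat.le_of_dvd h1 ((key _).mp h2)

/-- The key arithmetic fact: `a ↦ a / gcd d a` commutes with `gcd`. -/
lemma div_gcd_gcd (d : ℕ) (hd : 0 < d) (a b : ℕ) :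
    Nat.gcd (a / Nat.gcd d a) (b / Nat.gcd d b) =
      Nat.gcd a b / Nat.gcd d (Nat.gcd a b) := by
  rcases Nat.eq_zero_or_pos a with rfl | ha
  · rw [Nat.gcd_zero_right, Nat.zero_div, Nat.gcd_zero_left, Nat.gcd_zero_left]
  rcases Nat.eq_zero_or_pos b with rfl | hb
  · rw [Nat.gcd_zero_right, Nat.zero_div, Nat.gcd_zero_right, Nat.gcd_zero_right]
  have hfa : 0 < a / Nat.gcd d a :=
    Nat.div_pos (Nat.le_of_dvd ha (Nat.gcd_dvd_right d a)) (Nat.gcd_pos_of_pos_left a hd)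
  have hfb : 0 < b / Nat.gcd d b :=
    Nat.div_pos (Nat.le_of_dvd hb (Nat.gcd_dvd_right d b)) (Nat.gcd_pos_of_pos_left b hd)
  have hgab : 0 < Nat.gcd a b := Nat.gcd_pos_of_pos_left b ha
  have hrhs : 0 < Nat.gcd a b / Nat.gcd d (Nat.gcd a b) :=
    Nat.div_pos (Nat.le_of_dvd hgab (Nat.gcd_dvd_right d _)) (Nat.gcd_pos_of_pos_left _ hd)
  have hlhs : 0 < Nat.gcd (a / Nat.gcd d a) (b / Nat.gcd d b) :=
    Nat.gcd_pos_of_pos_left _ hfa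
  apply Nat.eq_of_factorization_eq hlhs.ne' hrhs.ne'
  intro p
  have fact_div : ∀ c : ℕ, 0 < c →
      (c / Nat.gcd d c).factorization p = c.factorization p - d.factorization p := by
    intro c hc
    rw [Nat.factorization_div (Nat.gcd_dvd_right d c),
      Nat.factorization_gcd hd.ne' hc.ne', Finsupp.tsub_apply, Finsupp.inf_apply]
    omega
  rw [Nat.factorization_gcd hfa.ne' hfb.ne', Finsupp.inf_apply,
    fact_div a ha, fact_div b hb, fact_div _ hgab,
    Nat.factorization_gcd ha.ne' hb.ne', Finsupp.inf_apply]
  omega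

lemma Finset.gcd_div_gcd {ι : Type*} (s : Finset ι) (d : ℕ) (hd : 0 < d) (f : ι → ℕ) :
    (s.gcd fun i => f i / Nat.gcd d (f i)) = s.gcd f / Nat.gcd d (s.gcd f) := by
  classical
  induction s using Finset.induction with
  | empty => simp
  | insert _ _ h ih =>
    rw [Finset.gcd_insert, Finset.gcd_insert, ih]
    exact div_gcd_gcd d hd _ _

end aux

theorem stmt13 {G : Type*} [Group G] [Fintype G] (s : ℕ) (M : Fin s → Subgroup G)
    (x : G) (d : ℕ) (hd : 0 < d) :
    EOrd M (x ^ d) = EOrd M x / Nat.gcd d (EOrd M x) := by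
  unfold EOrd
  rw [← Finset.gcd_div_gcd _ d hd]
  apply Finset.gcd_congr rfl
  intro i _
  unfold gOrd
  rw [← Finset.gcd_div_gcd _ d hd]
  apply Finset.gcd_congr rfl
  intro g _
  have hc : ∀ m : ℕ, (g⁻¹ * x * g) ^ m = g⁻¹ * x ^ m * g := by
    intro m
    induction m with
    | zero => group
    | succ n ih => rw [pow_succ, pow_succ, ih]; group
  rw [← hc d, nOrd_pow _ _ d hd]
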